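/- Let k be a field, g a Lie algebra over k, and D : g → End_k(g) a k-linear map such that: (i) each D(X) is a derivation of g; (ii) D(X) ∘ D(Y) = D(Y) ∘ D(X) for all X,Y; (iii) D(⁅X,Y⁆) = 0; (iv) D(D(X)(Y)) = 0 for all X,Y. Then the linear map ψ : g → End_k(g) defined by ψ(X) = ad(X) − D(X) satisfies ψ(X) ∘ ψ(Y) − ψ(Y) ∘ ψ(X) = ψ(⁅X,Y⁆ − D(X)(Y) + D(Y)(X)) for all X,Y ∈ g; that is, ψ is a homomorphism of Lie algebras from g equipped with the unipotent-hull bracket to the endomorphism algebra End_k(g) with the commutator bracket. -/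

import Mathlib

/-- The "unipotent-hull bracket" on a Lie algebra `g` associated to a linear map
`D : g → End(g)`: `⁅X, Y⁆' = ⁅X, Y⁆ - D X Y + D Y X`. -/
def uhBracket {k : Type*} [Field k] {g : Type*} [LieRing g] [LieAlgebra k g]
    (D : g →ₗ[k] Module.End k g) (X Y : g) : g :=
  ⁅X, Y⁆ - D X Y + D Y X

/-- If `D : g → End(g)` is a linear map such that each `D X` is a derivation of `g`,
the endomorphisms `D X` pairwise commute, `D` vanishes on brackets and on the image of
every `D X`, then `ψ X := ad X - D X` satisfies
`ψ X ∘ ψ Y - ψ Y ∘ ψ X = ψ (⁅X,Y⁆ - D X Y + D Y X)`, i.e. `ψ` is a morphism of Lie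
algebras from `g` with the unipotent-hull bracket to `End(g)` with the commutator
bracket. -/
theorem ad_sub_D_isLieHom {k : Type*} [Field k] {g : Type*} [LieRing g] [LieAlgebra k g]
    (D : g →ₗ[k] Module.End k g)
    (hder : ∀ X Y Z : g, D X ⁅Y, Z⁆ = ⁅D X Y, Z⁆ + ⁅Y, D X Z⁆)
    (hcomm : ∀ X Y : g, D X ∘ₗ D Y = D Y ∘ₗ D X)
    (hbracket : ∀ X Y : g, D ⁅X, Y⁆ = 0)
    (hDD : ∀ X Y : g, D (D X Y) = 0) :
    ∀ X Y : g,
      (LieAlgebra.ad k g X - D X) ∘ₗ (LieAlgebra.ad k g Y - D Y) -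
          (LieAlgebra.ad k g Y - D Y) ∘ₗ (LieAlgebra.ad k g X - D X) =
        LieAlgebra.ad k g (uhBracket D X Y) - D (uhBracket D X Y) := by
  intro X Y
  unfold uhBracket
  ext Z
  have hc := LinearMap.congr_fun (hcomm X Y) Z
  simp only [LinearMap.sub_apply, LinearMap.comp_apply, LieAlgebra.ad_apply, map_add,
    map_sub, hbracket, hDD, hder, LinearMap.zero_apply] at *
  simp only [lie_sub, sub_lie, add_lie, lie_add, LinearMap.add_apply, LinearMap.sub_apply,
    LieAlgebra.ad_apply, LinearMap.zero_apply]
  rw [leibniz_lie X Y Z]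
  abel_nf
  rw [hc]
  abel
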